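/- For a nonzero formal polynomial P over R_max, the canonical form P^c (defined by P^c_k = inf_y (P̂(y) - ky)) coincides with the concave hull P^♯, where P^♯_k = max{(1-t)P_i + t P_j : i,j ∈ N, t ∈ Q ∩ [0,1], (1-t)i + tj = k}. -/

import Mathlib

set_option linter.unusedVariables false

noncomputable section

/-- The max-plus (tropical) semifield `R_max = ℝ ∪ {-∞}`, with addition `max`
and multiplication `+`. -/
abbrev RMax := WithBot ℝ

/-- The polynomial function `P̂(y) = max_{k ≤ n} (P_k + k·y)` of a formal
polynomial over `R_max` of degree at most `n`. -/
def tPhat (P : ℕ → RMax) (n : ℕ) (y : RMax) : RMax :=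
  (Finset.range (n + 1)).sup fun k => P k + k • y

/-- The convex combination `(1-t)·a + t·b` in `R_max`, equal to `⊥` if either
argument is `⊥`. -/
def convexComb (t : ℝ) (a b : RMax) : RMax :=
  WithBot.recBotCoe ⊥
    (fun x => WithBot.recBotCoe ⊥
      (fun z => (((1 - t) * x + t * z : ℝ) : RMax)) b) a

lemma convexComb_bot_left (t : ℝ) (b : RMax) : convexComb t ⊥ b = ⊥ := by
  simp [convexComb]

lemma convexComb_bot_right (t : ℝ) (a : RMax) : convexComb t a ⊥ = ⊥ := by
  cases a <;> rfl

lemma convexComb_coe (t x z : ℝ) :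
    convexComb t ↑x ↑z = (((1 - t) * x + t * z : ℝ) : RMax) := by
  simp [convexComb]

lemma rmax_nsmul_coe (i : ℕ) (y : ℝ) : (i • ((y : ℝ) : RMax)) = ((i * y : ℝ) : RMax) := by
  rw [← WithBot.coe_nsmul, nsmul_eq_mul]

/-- For a nonzero formal polynomial `P` over `R_max`, the canonical form `P^c`
(the coefficientwise greatest lower bound `P^c_k = inf_y (P̂(y) - k·y)`)
coincides with the concave hull `P^♯`, where
`P^♯_k = max {(1-t)·P_i + t·P_j : i, j ∈ ℕ, t ∈ ℚ ∩ [0,1], (1-t)·i + t·j = k}`. -/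
theorem rmax_canonical_form_eq_concave_hull (P : ℕ → RMax) (n : ℕ)
    (hPn : P n ≠ ⊥) (hdeg : ∀ k, n < k → P k = ⊥)
    (Pc Psharp : ℕ → RMax)
    (hPc : ∀ k : ℕ,
      IsGLB (Set.range fun y : ℝ => tPhat P n (y : RMax) + ((-(k * y) : ℝ) : RMax)) (Pc k))
    (hPs : ∀ k : ℕ,
      IsLUB {z : RMax | ∃ (i j : ℕ) (t : ℚ), 0 ≤ t ∧ t ≤ 1 ∧
        (1 - (t : ℝ)) * (i : ℝ) + (t : ℝ) * (j : ℝ) = (k : ℝ) ∧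
        z = convexComb (t : ℝ) (P i) (P j)} (Psharp k)) :
    Pc = Psharp := by
  -- real coefficients
  set p : ℕ → ℝ := fun i => WithBot.unbotD 0 (P i) with hpdef
  have hcoe : ∀ i, P i ≠ ⊥ → P i = ↑(p i) := by
    intro i hi
    cases h : P i with
    | none => exact absurd h hi
    | some x => simp only [hpdef, h]; rfl
  have hle_deg : ∀ i, P i ≠ ⊥ → i ≤ n := by
    intro i hi
    by_contra h
    exact hi (hdeg i (by omega))
  -- bounding tPhat from above
  have htle : ∀ (y c : ℝ), (∀ i, i ≤ n → P i ≠ ⊥ → p i + i * y ≤ c) →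
      tPhat P n ↑y ≤ ↑c := by
    intro y c h
    apply Finset.sup_le
    intro i hi
    rw [Finset.mem_range] at hi
    have hi' : i ≤ n := Nat.lt_succ_iff.mp hi
    by_cases hb : P i = ⊥
    · simp [hb]
    · rw [hcoe i hb, rmax_nsmul_coe, ← WithBot.coe_add, WithBot.coe_le_coe]
      exact h i hi' hb
  -- bounding tPhat from below
  have hge : ∀ (i : ℕ), i ≤ n → ∀ y : ℝ, P i ≠ ⊥ →
      ((p i + i * y : ℝ) : RMax) ≤ tPhat P n ↑y := by
    intro i hi y hb
    have hmem : i ∈ Finset.range (n + 1) := Finset.mem_range.mpr (Nat.lt_succ_of_le hi)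
    have h := Finset.le_sup (f := fun j : ℕ => P j + j • ((y : ℝ) : RMax)) hmem
    rwa [hcoe i hb, rmax_nsmul_coe, ← WithBot.coe_add] at h
  funext k
  -- membership helper
  have hmem : ∀ (i j : ℕ) (t : ℚ), 0 ≤ t → t ≤ 1 →
      (1 - (t : ℝ)) * (i : ℝ) + (t : ℝ) * (j : ℝ) = (k : ℝ) → P i ≠ ⊥ → P j ≠ ⊥ →
      ((((1 - (t : ℝ)) * p i + (t : ℝ) * p j : ℝ)) : RMax) ≤ Psharp k := by
    intro i j t ht0 ht1 hcons hi hj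
    refine (hPs k).1 ⟨i, j, t, ht0, ht1, hcons, ?_⟩
    rw [hcoe i hi, hcoe j hj, convexComb_coe]
  -- easy direction: Psharp k ≤ Pc k
  have hub : ∀ y : ℝ, (tPhat P n ↑y + ((-(k * y) : ℝ) : RMax)) ∈ upperBounds
      {z : RMax | ∃ (i j : ℕ) (t : ℚ), 0 ≤ t ∧ t ≤ 1 ∧
        (1 - (t : ℝ)) * (i : ℝ) + (t : ℝ) * (j : ℝ) = (k : ℝ) ∧
        z = convexComb (t : ℝ) (P i) (P j)} := by
    intro y z hz
    obtain ⟨i, j, t, ht0, ht1, hcons, hzv⟩ := hz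
    by_cases hi : P i = ⊥
    · rw [hzv, hi, convexComb_bot_left]; exact bot_le
    by_cases hj : P j = ⊥
    · rw [hzv, hj, convexComb_bot_right]; exact bot_le
    have hin := hle_deg i hi
    have hjn := hle_deg j hj
    have hA := hge i hin y hi
    have hB := hge j hjn y hj
    have hne : tPhat P n ↑y ≠ ⊥ := by
      intro h
      rw [h] at hA
      exact WithBot.coe_ne_bot (le_antisymm hA bot_le)
    obtain ⟨c, hc⟩ : ∃ c : ℝ, tPhat P n ↑y = ↑c := Option.ne_none_iff_exists'.mp hne
    rw [hc] at hA hB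
    rw [hc, hzv, hcoe i hi, hcoe j hj, convexComb_coe, ← WithBot.coe_add, WithBot.coe_le_coe]
    have hA' := WithBot.coe_le_coe.mp hA
    have hB' := WithBot.coe_le_coe.mp hB
    have ht0' : (0:ℝ) ≤ (t:ℝ) := by exact_mod_cast ht0
    have ht1' : (t:ℝ) ≤ 1 := by exact_mod_cast ht1
    have hcons' : ((1 - (t:ℝ)) * (i:ℝ) + (t:ℝ) * (j:ℝ)) * y = (k:ℝ) * y := by
      rw [hcons]
    nlinarith [mul_le_mul_of_nonneg_left hA' (by linarith : (0:ℝ) ≤ 1 - (t:ℝ)),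
      mul_le_mul_of_nonneg_left hB' ht0']
  have easy : Psharp k ≤ Pc k := by
    apply (hPc k).2
    rintro x ⟨y, rfl⟩
    exact (hPs k).2 (hub y)
  refine le_antisymm ?_ easy
  -- hard direction: Pc k ≤ Psharp k
  by_cases hk1 : k ≤ n ∧ ∃ m, m ≤ k ∧ P m ≠ ⊥
  · obtain ⟨hkn, m, hmk, hm⟩ := hk1
    have hmn : m ≤ n := hle_deg m hm
    -- Psharp k is not ⊥
    have hsne : Psharp k ≠ ⊥ := by
      rcases Nat.eq_or_lt_of_le hmn with heq | hlt
      · -- m = n, so k = n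
        obtain rfl : k = n := by omega
        have h := hmem k k 0 le_rfl zero_le_one (by push_cast; ring) hPn hPn
        intro hb
        rw [hb] at h
        exact WithBot.coe_ne_bot (le_antisymm h bot_le)
      · have hmR : ((m:ℝ)) < (n:ℝ) := by exact_mod_cast hlt
        have hmQ : ((m:ℚ)) < (n:ℚ) := by exact_mod_cast hlt
        have hmkQ : ((m:ℚ)) ≤ (k:ℚ) := by exact_mod_cast hmk
        have hknQ : ((k:ℚ)) ≤ (n:ℚ) := by exact_mod_cast hkn
        have hne0 : (n:ℝ) - (m:ℝ) ≠ 0 := by linarith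
        have h := hmem m n (((k:ℚ)-m)/((n:ℚ)-m))
          (div_nonneg (by linarith) (by linarith))
          ((div_le_one (by linarith)).mpr (by linarith))
          (by push_cast; field_simp; ring) hm hPn
        intro hb
        rw [hb] at h
        exact WithBot.coe_ne_bot (le_antisymm h bot_le)
    obtain ⟨s, hs⟩ : ∃ s : ℝ, Psharp k = ↑s := Option.ne_none_iff_exists'.mp hsne
    -- key concavity inequality
    have hkmem : ∀ i j : ℕ, i ≤ n → j ≤ n → P i ≠ ⊥ → P j ≠ ⊥ → i ≤ k → k ≤ j →
        ((j:ℝ)-k)*p i + ((k:ℝ)-i)*p j ≤ ((j:ℝ)-i)*s := by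
      intro i j hin hjn hib hjb hik hkj
      rcases Nat.eq_or_lt_of_le (hik.trans hkj) with hij | hij
      · have hi' : (i:ℝ) = (k:ℝ) := by exact_mod_cast (by omega : i = k)
        have hj' : (j:ℝ) = (k:ℝ) := by exact_mod_cast (by omega : j = k)
        rw [hi', hj']
        simp
      · have hijR : (i:ℝ) < (j:ℝ) := by exact_mod_cast hij
        have hijQ : (i:ℚ) < (j:ℚ) := by exact_mod_cast hij
        have hikQ : (i:ℚ) ≤ (k:ℚ) := by exact_mod_cast hik
        have hkjQ : (k:ℚ) ≤ (j:ℚ) := by exact_mod_cast hkj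
        have hne0 : (j:ℝ) - (i:ℝ) ≠ 0 := by linarith
        have h := hmem i j (((k:ℚ)-i)/((j:ℚ)-i))
          (div_nonneg (by linarith) (by linarith))
          ((div_le_one (by linarith)).mpr (by linarith))
          (by push_cast; field_simp; ring) hib hjb
        rw [hs] at h
        have hr := WithBot.coe_le_coe.mp h
        have htR : ((((k:ℚ)-i)/((j:ℚ)-i) : ℚ) : ℝ) = ((k:ℝ)-(i:ℝ))/((j:ℝ)-(i:ℝ)) := by
          push_cast; ring
        rw [htR] at hr
        have key : ((j:ℝ)-k)*p i + ((k:ℝ)-i)*p j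
            = ((j:ℝ)-i) * ((1 - ((k:ℝ)-i)/((j:ℝ)-i)) * p i + (((k:ℝ)-i)/((j:ℝ)-i)) * p j) := by
          field_simp
          ring
        rw [key]
        exact mul_le_mul_of_nonneg_left hr (by linarith)
    -- finishing lemma: a good slope y yields the bound
    have hfin : ∀ y : ℝ, (∀ i, i ≤ n → P i ≠ ⊥ → p i + i * y ≤ s + k * y) →
        Pc k ≤ Psharp k := by
      intro y hb
      have h4 := htle y (s + k * y) hb
      have h5 : Pc k ≤ tPhat P n ↑y + ((-(k * y) : ℝ) : RMax) := (hPc k).1 ⟨y, rfl⟩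
      rw [hs]
      refine h5.trans ?_
      calc tPhat P n ↑y + ((-(k * y) : ℝ) : RMax)
          ≤ ((s + k * y : ℝ) : RMax) + ((-(k * y) : ℝ) : RMax) := add_le_add_left h4 _
        _ = ((s : ℝ) : RMax) := by rw [← WithBot.coe_add]; norm_num
    by_cases hup : ∃ j, j ≤ n ∧ P j ≠ ⊥ ∧ k < j
    · -- there is support above k
      obtain ⟨j1, hj1n, hj1b, hj1k⟩ := hup
      set Sg : Finset ℕ := (Finset.range (n+1)).filter (fun j => P j ≠ ⊥ ∧ k < j) with hSg
      have hneS : Sg.Nonempty := by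
        refine ⟨j1, ?_⟩
        simp only [hSg, Finset.mem_filter, Finset.mem_range]
        exact ⟨by omega, hj1b, hj1k⟩
      obtain ⟨j0, hj0mem, hj0eq⟩ :=
        Finset.exists_mem_eq_inf' hneS (fun j => (s - p j)/((j:ℝ) - k))
      simp only [hSg, Finset.mem_filter, Finset.mem_range] at hj0mem
      obtain ⟨hj0n', hj0b, hj0k⟩ := hj0mem
      have hj0n : j0 ≤ n := by omega
      have hj0R : (0:ℝ) < (j0:ℝ) - k := by
        have : (k:ℝ) < (j0:ℝ) := by exact_mod_cast hj0k
        linarith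
      set y : ℝ := Sg.inf' hneS (fun j => (s - p j)/((j:ℝ) - k)) with hy
      apply hfin y
      intro i hin hib
      rcases lt_or_ge k i with hki | hik
      · have himem : i ∈ Sg := by
          simp only [hSg, Finset.mem_filter, Finset.mem_range]
          exact ⟨by omega, hib, hki⟩
        have h1 : y ≤ (s - p i)/((i:ℝ)-k) := Finset.inf'_le _ himem
        have h2 : (0:ℝ) < (i:ℝ)-k := by
          have : (k:ℝ) < (i:ℝ) := by exact_mod_cast hki
          linarith
        rw [le_div_iff₀ h2] at h1
        nlinarith
      · have hkm := hkmem i j0 hin hj0n hib hj0b hik (le_of_lt hj0k)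
        have hyv : y = (s - p j0)/((j0:ℝ)-k) := hj0eq
        have hY : y * ((j0:ℝ) - k) = s - p j0 := by
          rw [hyv]; field_simp
        have hY2 : ((i:ℝ)-k) * (y * ((j0:ℝ)-k)) = ((i:ℝ)-k)*(s - p j0) := by rw [hY]
        have h3 : ((j0:ℝ)-k) * (p i + ((i:ℝ)-k)*y) ≤ ((j0:ℝ)-k) * s := by
          nlinarith [hkm, hY2]
        have h4 := le_of_mul_le_mul_left h3 hj0R
        nlinarith [h4]
    · -- all support is below or at k
      push_neg at hup
      set Sl : Finset ℕ := (Finset.range (n+1)).filter (fun i => P i ≠ ⊥) with hSl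
      have hneS : Sl.Nonempty := by
        refine ⟨n, ?_⟩
        simp only [hSl, Finset.mem_filter, Finset.mem_range]
        exact ⟨by omega, hPn⟩
      set y : ℝ := Sl.sup' hneS (fun i => (p i - s)/((k:ℝ) - i)) with hy
      apply hfin y
      intro i hin hib
      have hik : i ≤ k := hup i hin hib
      rcases Nat.eq_or_lt_of_le hik with heq | hlt
      · obtain rfl : i = k := heq
        have h := hmem i i 0 le_rfl zero_le_one (by push_cast; ring) hib hib
        rw [hs] at h
        have := WithBot.coe_le_coe.mp h
        nlinarith [this]
      · have himem : i ∈ Sl := by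
          simp only [hSl, Finset.mem_filter, Finset.mem_range]
          exact ⟨by omega, hib⟩
        have h1 : (p i - s)/((k:ℝ)-i) ≤ y := by
          rw [hy]
          exact Finset.le_sup' (f := fun j : ℕ => (p j - s)/((k:ℝ) - (j:ℝ))) himem
        have h2 : (0:ℝ) < (k:ℝ)-i := by
          have : (i:ℝ) < (k:ℝ) := by exact_mod_cast hlt
          linarith
        rw [div_le_iff₀ h2] at h1
        nlinarith
  · -- Pc k = ⊥
    push_neg at hk1
    obtain ⟨d, hd⟩ : ∃ d : ℝ, ∀ i, i ≤ n → P i ≠ ⊥ → ((i:ℝ) - k) * d ≤ -1 := by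
      rcases le_or_gt k n with h | h
      · refine ⟨-1, fun i hi hb => ?_⟩
        have hik : k < i := by
          by_contra hc
          exact hb (hk1 h i (by omega))
        have : (k:ℝ) + 1 ≤ (i:ℝ) := by exact_mod_cast hik
        nlinarith
      · refine ⟨1, fun i hi hb => ?_⟩
        have : (i:ℝ) + 1 ≤ (k:ℝ) := by exact_mod_cast (by omega : i + 1 ≤ k)
        nlinarith
    by_cases hbot : Pc k = ⊥
    · rw [hbot]; exact bot_le
    exfalso
    obtain ⟨c, hc⟩ : ∃ c : ℝ, Pc k = ↑c := Option.ne_none_iff_exists'.mp hbot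
    set M : ℝ := (Finset.range (n+1)).sup' ⟨0, by simp⟩ p with hM
    have hpM : ∀ i, i ≤ n → p i ≤ M :=
      fun i hi => Finset.le_sup' p (Finset.mem_range.mpr (Nat.lt_succ_of_le hi))
    set T : ℝ := max 0 (M - c + 1) with hT
    have hT0 : (0:ℝ) ≤ T := le_max_left _ _
    have hT1 : M - c + 1 ≤ T := le_max_right _ _
    set y : ℝ := d * T with hy
    have hb : ∀ i, i ≤ n → P i ≠ ⊥ → p i + i * y ≤ (c - 1) + k * y := by
      intro i hi hbi
      have h1 := hd i hi hbi
      have h2 : ((i:ℝ) - k) * d * T ≤ -T := by nlinarith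
      have h3 := hpM i hi
      nlinarith
    have h4 := htle y ((c - 1) + k * y) hb
    have h5 : Pc k ≤ tPhat P n ↑y + ((-(k * y) : ℝ) : RMax) := (hPc k).1 ⟨y, rfl⟩
    rw [hc] at h5
    have h6 : tPhat P n ↑y + ((-(k * y) : ℝ) : RMax) ≤ ((c - 1 : ℝ) : RMax) := by
      calc tPhat P n ↑y + ((-(k * y) : ℝ) : RMax)
          ≤ ((c - 1 + k * y : ℝ) : RMax) + ((-(k * y) : ℝ) : RMax) := add_le_add_left h4 _
        _ = ((c - 1 : ℝ) : RMax) := by rw [← WithBot.coe_add]; norm_num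
    have := WithBot.coe_le_coe.mp (h5.trans h6)
    linarith
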